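/- Let G = (V, E) be a finite simple triangle-free graph of maximum degree at most 3, let k be a positive integer with |E| ≤ 3k, and let ε > 0 be such that every vertex cover of G has size at least k(1+ε). Set κ = 6k + 3(|E| − 2k)·log₂ 3 and η = (1.25 − 0.75·log₂ 3)·ε / (6 + 3·log₂ 3). Then every partition of E into k clusters C₁, …, C_k satisfies Σ_{i=1}^{k} I_Ent(Cᵢ) ≥ (1+η)·κ. -/

import Mathlib

open scoped Classical

/-- The entropy impurity of a set `C` of edges:
`I_Ent(C) = Σ_{v ∈ V} d^C(v) · log₂(2|C| / d^C(v))`. -/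
noncomputable def impurity {V : Type*} [Fintype V] (C : Finset (Sym2 V)) : ℝ :=
  ∑ v : V, ((C.filter (fun e => v ∈ e)).card : ℝ) *
    Real.logb 2 ((2 * C.card : ℝ) / ((C.filter (fun e => v ∈ e)).card : ℝ))

/-- A vertex cover: a set of vertices touching every edge. -/
def IsVCover {V : Type*} (G : SimpleGraph V) (S : Finset V) : Prop :=
  ∀ e ∈ G.edgeSet, ∃ v ∈ S, v ∈ e

open Finset

set_option linter.unusedSectionVars false
set_option linter.unusedVariables false
set_option linter.unnecessarySeqFocus false


private lemma logb_pow_nat (b x : ℝ) (n : ℕ) : Real.logb b (x^n) = n * Real.logb b x :=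
  by rw [Real.logb_pow]

private lemma L_lb : (84:ℝ)/53 < Real.logb 2 3 := by
  have h : Real.logb 2 ((2:ℝ)^(84:ℕ)) < Real.logb 2 ((3:ℝ)^(53:ℕ)) :=
    Real.logb_lt_logb (by norm_num) (by positivity) (by norm_num)
  rw [logb_pow_nat, logb_pow_nat, Real.logb_self_eq_one (by norm_num)] at h
  push_cast at h
  linarith

private lemma L_ub : Real.logb 2 3 < 65/41 := by
  have h : Real.logb 2 ((3:ℝ)^(41:ℕ)) < Real.logb 2 ((2:ℝ)^(65:ℕ)) :=
    Real.logb_lt_logb (by norm_num) (by positivity) (by norm_num)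
  rw [logb_pow_nat, logb_pow_nat, Real.logb_self_eq_one (by norm_num)] at h
  push_cast at h
  linarith

private lemma P_lb : (58:ℝ)/25 < Real.logb 2 5 := by
  have h : Real.logb 2 ((2:ℝ)^(58:ℕ)) < Real.logb 2 ((5:ℝ)^(25:ℕ)) :=
    Real.logb_lt_logb (by norm_num) (by positivity) (by norm_num)
  rw [logb_pow_nat, logb_pow_nat, Real.logb_self_eq_one (by norm_num)] at h
  push_cast at h
  linarith

private lemma P_ub : Real.logb 2 5 < 7/3 := by
  have h : Real.logb 2 ((5:ℝ)^(3:ℕ)) < Real.logb 2 ((2:ℝ)^(7:ℕ)) :=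
    Real.logb_lt_logb (by norm_num) (by positivity) (by norm_num)
  rw [logb_pow_nat, logb_pow_nat, Real.logb_self_eq_one (by norm_num)] at h
  push_cast at h
  linarith

private lemma seven_lb : (14:ℝ)/5 < Real.logb 2 7 := by
  have h : Real.logb 2 ((2:ℝ)^(14:ℕ)) < Real.logb 2 ((7:ℝ)^(5:ℕ)) :=
    Real.logb_lt_logb (by norm_num) (by positivity) (by norm_num)
  rw [logb_pow_nat, logb_pow_nat, Real.logb_self_eq_one (by norm_num)] at h
  push_cast at h
  linarith

private lemma logb_ge_three (m : ℕ) (h : 8 ≤ m) : (3:ℝ) ≤ Real.logb 2 m := by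
  have h8 : ((2:ℝ)^(3:ℕ)) ≤ (m:ℝ) := by
    have : (8:ℝ) ≤ m := by exact_mod_cast h
    norm_num; linarith
  have := Real.logb_le_logb_of_le (by norm_num : (1:ℝ) < 2) (by positivity) h8
  rwa [logb_pow_nat, Real.logb_self_eq_one (by norm_num), mul_one] at this

set_option maxHeartbeats 2000000 in
private lemma arith_small (m a2 a3 s1 : ℕ) (hm : 1 ≤ m) (hm6 : m ≤ 6)
    (hsum : 2*a2 + 3*a3 + 2*s1 ≤ 2*m)
    (hs2 : 1 ≤ a2 → s1 + 2 ≤ m) (hs3 : 1 ≤ a3 → s1 + 3 ≤ m)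
    (hp22 : 2 ≤ a2 → 3 ≤ m) (hp23 : 1 ≤ a2 → 1 ≤ a3 → 4 ≤ m) (hp33 : 2 ≤ a3 → 5 ≤ m)
    (ht222 : 3 ≤ a2 → 4 ≤ m) (ht223 : 2 ≤ a2 → 1 ≤ a3 → 5 ≤ m)
    (ht233 : 1 ≤ a2 → 2 ≤ a3 → 6 ≤ m) (ht333 : 3 ≤ a3 → 7 ≤ m) :
    6 + 3*((m:ℝ) - 2) * Real.logb 2 3
      + (1.25 - 0.75 * Real.logb 2 3) * ((a2:ℝ) + a3 + s1 - 1)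
      ≤ 2*m*(1 + Real.logb 2 m) - 2*(a2:ℝ) - 3*(Real.logb 2 3)*a3 := by
  have hL1 := L_lb; have hL2 := L_ub
  have ha2 : a2 ≤ 6 := by omega
  have ha3 : a3 ≤ 4 := by omega
  have hs1 : s1 ≤ 6 := by omega
  have h4 : Real.logb 2 (4:ℝ) = 2 := by
    rw [show (4:ℝ) = 2^(2:ℕ) by norm_num, Real.logb_pow, Real.logb_self_eq_one (by norm_num)]
    norm_num
  have h6 : Real.logb 2 (6:ℝ) = 1 + Real.logb 2 3 := by
    rw [show (6:ℝ) = 2*3 by norm_num, Real.logb_mul (by norm_num) (by norm_num),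
      Real.logb_self_eq_one (by norm_num)]
  interval_cases m
  · push_cast
    rw [Real.logb_one]
    interval_cases a2 <;> interval_cases a3 <;> interval_cases s1 <;>
      first | omega | (norm_num <;> linarith [hL1, hL2])
  · push_cast
    rw [Real.logb_self_eq_one (by norm_num : (1:ℝ) < 2)]
    interval_cases a2 <;> interval_cases a3 <;> interval_cases s1 <;>
      first | omega | (norm_num <;> linarith [hL1, hL2])
  · push_cast
    interval_cases a2 <;> interval_cases a3 <;> interval_cases s1 <;>
      first | omega | (norm_num <;> linarith [hL1, hL2])
  · push_cast
    rw [h4]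
    interval_cases a2 <;> interval_cases a3 <;> interval_cases s1 <;>
      first | omega | (norm_num <;> linarith [hL1, hL2])
  · push_cast
    interval_cases a2 <;> interval_cases a3 <;> interval_cases s1 <;>
      first | omega | (norm_num <;> linarith [hL1, hL2, P_lb, P_ub])
  · push_cast
    rw [h6]
    interval_cases a2 <;> interval_cases a3 <;> interval_cases s1 <;>
      first | omega | (norm_num <;> linarith [hL1, hL2])

private lemma arith_large (m a2 a3 s1 : ℕ) (hm : 7 ≤ m)
    (hsum : 2*a2 + 3*a3 + 2*s1 ≤ 2*m) :
    6 + 3*((m:ℝ) - 2) * Real.logb 2 3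
      + (1.25 - 0.75 * Real.logb 2 3) * ((a2:ℝ) + a3 + s1 - 1)
      ≤ 2*m*(1 + Real.logb 2 m) - 2*(a2:ℝ) - 3*(Real.logb 2 3)*a3 := by
  have hL1 := L_lb; have hL2 := L_ub
  set L := Real.logb 2 3 with hL
  have hm7 : (7:ℝ) ≤ m := by exact_mod_cast hm
  have hX : (a2:ℝ) + a3 + s1 ≤ m := by exact_mod_cast (by omega : a2+a3+s1 ≤ m)
  have hX0 : (0:ℝ) ≤ (a2:ℝ) + a3 + s1 := by positivity
  have hD : 2*(a2:ℝ) + 3*a3 ≤ 2*m := by exact_mod_cast (by omega : 2*a2+3*a3 ≤ 2*m)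
  have hLa : 2*(a2:ℝ) + 3*L*a3 ≤ L*(2*m) := by
    have h1 : 2*(a2:ℝ) + 3*L*(a3:ℝ) ≤ L*(2*(a2:ℝ)+3*(a3:ℝ)) := by
      nlinarith [(by positivity : (0:ℝ) ≤ (a2:ℝ)), (by positivity : (0:ℝ) ≤ (a3:ℝ))]
    have h2 : L*(2*(a2:ℝ)+3*(a3:ℝ)) ≤ L*(2*m) :=
      mul_le_mul_of_nonneg_left hD (by linarith)
    linarith
  have hc : (1.25 - 0.75*L) * ((a2:ℝ)+a3+s1-1) ≤ (13/212) * m := by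
    have h1 : (1.25 - 0.75*L) * ((a2:ℝ)+a3+s1-1) ≤ (1.25-0.75*L) * ((a2:ℝ)+a3+s1) := by
      nlinarith
    have h2 : (1.25 - 0.75*L) * ((a2:ℝ)+a3+s1) ≤ (13/212) * ((a2:ℝ)+a3+s1) := by
      nlinarith
    linarith
  have hLm : 3*((m:ℝ)-2)*L ≤ 3*((m:ℝ)-2)*(65/41) := by
    have h0 : (0:ℝ) ≤ 3*((m:ℝ)-2) := by linarith
    nlinarith
  rcases (by omega : m = 7 ∨ 8 ≤ m) with rfl | h8
  · have hmu : (14:ℝ)/5 ≤ Real.logb 2 ((7:ℕ):ℝ) := by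
      have := seven_lb; push_cast; linarith
    push_cast at hLa hc ⊢
    linarith [hmu]
  · have hmu : (3:ℝ) ≤ Real.logb 2 m := logb_ge_three m h8
    have hmm : (2*(m:ℝ))*(1+3) ≤ 2*m*(1+Real.logb 2 m) := by nlinarith
    have hLa2 : L*(2*(m:ℝ)) ≤ (65/41)*(2*m) :=
      mul_le_mul_of_nonneg_right (le_of_lt hL2) (by positivity)
    linarith

section ClusterLemmas
variable {V : Type*} [Fintype V] {G : SimpleGraph V} [DecidableRel G.Adj]

private noncomputable def dC (C : Finset (Sym2 V)) (v : V) : ℕ :=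
  (C.filter (fun e => v ∈ e)).card

private noncomputable def isoEdges (C : Finset (Sym2 V)) : Finset (Sym2 V) :=
  C.filter (fun e => ∀ v, v ∈ e → dC C v = 1)

private lemma edge_eq_of_mem {u w : V} {e : Sym2 V} (hu : u ∈ e) (hw : w ∈ e) (hne : u ≠ w) :
    e = s(u,w) := by
  induction e with
  | _ a b =>
    rw [Sym2.mem_iff] at hu hw
    rcases hu with rfl|rfl <;> rcases hw with rfl|rfl
    · exact absurd rfl hne
    · rfl
    · rw [Sym2.eq_swap]
    · exact absurd rfl hne

private lemma card_mem_filter {e : Sym2 V} (he : ¬ e.IsDiag) :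
    (univ.filter (fun v => v ∈ e)).card = 2 := by
  induction e with
  | _ a b =>
    have hab : a ≠ b := by simpa using he
    have h : univ.filter (fun v => v ∈ s(a,b)) = {a, b} := by
      ext v; simp [Sym2.mem_iff]
    rw [h, Finset.card_insert_of_notMem (by simpa using hab), Finset.card_singleton]

private lemma not_diag_of_mem {C : Finset (Sym2 V)} (hC : C ⊆ G.edgeFinset) {e : Sym2 V}
    (he : e ∈ C) : ¬ e.IsDiag :=
  G.not_isDiag_of_mem_edgeSet (SimpleGraph.mem_edgeFinset.mp (hC he))

private lemma handshake {C : Finset (Sym2 V)} (hC : C ⊆ G.edgeFinset) :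
    ∑ v : V, dC C v = 2 * C.card := by
  unfold dC
  calc ∑ v : V, (C.filter (fun e => v ∈ e)).card
      = ∑ v : V, ∑ e ∈ C, if v ∈ e then 1 else 0 := by
        refine Finset.sum_congr rfl fun v _ => ?_; rw [Finset.card_filter]
    _ = ∑ e ∈ C, ∑ v : V, if v ∈ e then 1 else 0 := Finset.sum_comm
    _ = ∑ e ∈ C, 2 := by
        refine Finset.sum_congr rfl fun e he => ?_
        rw [← Finset.card_filter]
        exact card_mem_filter (not_diag_of_mem hC he)
    _ = 2 * C.card := by rw [Finset.sum_const, smul_eq_mul, mul_comm]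

private lemma dC_le_three {C : Finset (Sym2 V)} (hC : C ⊆ G.edgeFinset)
    (hdeg : ∀ v, G.degree v ≤ 3) (v : V) : dC C v ≤ 3 := by
  refine le_trans ?_ (hdeg v)
  rw [← G.card_incidenceFinset_eq_degree v]
  apply Finset.card_le_card
  intro e he
  rw [Finset.mem_filter] at he
  rw [SimpleGraph.mem_incidenceFinset]
  exact ⟨SimpleGraph.mem_edgeFinset.mp (hC he.1), he.2⟩

private lemma degsum {C : Finset (Sym2 V)} (hC : C ⊆ G.edgeFinset)
    (hdeg : ∀ v, G.degree v ≤ 3) :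
    (univ.filter (fun v => dC C v = 1)).card + 2 * (univ.filter (fun v => dC C v = 2)).card
      + 3 * (univ.filter (fun v => dC C v = 3)).card = 2 * C.card := by
  have step : ∀ v : V, (if dC C v = 1 then 1 else 0) + 2*(if dC C v = 2 then 1 else 0)
      + 3*(if dC C v = 3 then 1 else 0) = dC C v := by
    intro v
    have h3 := dC_le_three hC hdeg v
    interval_cases h : dC C v <;> simp
  calc (univ.filter (fun v => dC C v = 1)).card + 2 * (univ.filter (fun v => dC C v = 2)).card
      + 3 * (univ.filter (fun v => dC C v = 3)).card
      = ∑ v : V, ((if dC C v = 1 then 1 else 0) + 2*(if dC C v = 2 then 1 else 0)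
          + 3*(if dC C v = 3 then 1 else 0)) := by
        rw [Finset.sum_add_distrib, Finset.sum_add_distrib, ← Finset.mul_sum, ← Finset.mul_sum,
          ← Finset.card_filter, ← Finset.card_filter, ← Finset.card_filter]
    _ = ∑ v : V, dC C v := Finset.sum_congr rfl fun v _ => step v
    _ = 2 * C.card := handshake hC

private lemma inter_card_le {C : Finset (Sym2 V)} {u w : V} (hne : u ≠ w) :
    ((C.filter (fun e => u ∈ e)) ∩ (C.filter (fun e => w ∈ e))).card ≤ 1 := by
  apply Finset.card_le_one.mpr
  intro e he f hf
  simp only [Finset.mem_inter, Finset.mem_filter] at he hf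
  rw [edge_eq_of_mem he.1.2 he.2.2 hne, edge_eq_of_mem hf.1.2 hf.2.2 hne]

private lemma adj_of_inter {C : Finset (Sym2 V)} (hC : C ⊆ G.edgeFinset) {u w : V} (hne : u ≠ w)
    (h : 1 ≤ ((C.filter (fun e => u ∈ e)) ∩ (C.filter (fun e => w ∈ e))).card) :
    G.Adj u w := by
  obtain ⟨e, he⟩ := Finset.card_pos.mp h
  simp only [Finset.mem_inter, Finset.mem_filter] at he
  have heq := edge_eq_of_mem he.1.2 he.2.2 hne
  have : s(u,w) ∈ G.edgeFinset := hC (heq ▸ he.1.1)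
  exact G.mem_edgeSet.mp (SimpleGraph.mem_edgeFinset.mp this)

private lemma pair_bound {C : Finset (Sym2 V)} (hC : C ⊆ G.edgeFinset) {u w : V} (hne : u ≠ w) :
    dC C u + dC C w ≤ C.card + 1 := by
  have h1 := Finset.card_union_add_card_inter (C.filter (fun e => u ∈ e))
    (C.filter (fun e => w ∈ e))
  have h2 : ((C.filter (fun e => u ∈ e)) ∪ (C.filter (fun e => w ∈ e))).card ≤ C.card :=
    Finset.card_le_card (Finset.union_subset (Finset.filter_subset _ _) (Finset.filter_subset _ _))
  have h3 := inter_card_le (C := C) hne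
  unfold dC
  omega

private lemma triple_bound {C : Finset (Sym2 V)} (hC : C ⊆ G.edgeFinset)
    (htf : G.CliqueFree 3) {u v w : V} (huv : u ≠ v) (huw : u ≠ w) (hvw : v ≠ w) :
    dC C u + dC C v + dC C w ≤ C.card + 2 := by
  by_contra hlt
  push_neg at hlt
  have bonf : ∀ A B D : Finset (Sym2 V), A ⊆ C → B ⊆ C → D ⊆ C →
      A.card + B.card + D.card ≤ C.card + (A∩B).card + (A∩D).card + (B∩D).card := by
    intro A B D hA hB hD
    have h1 := Finset.card_union_add_card_inter A B
    have h2 := Finset.card_union_add_card_inter (A ∪ B) D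
    have h3 : ((A∪B)∩D).card ≤ (A∩D).card + (B∩D).card := by
      rw [Finset.union_inter_distrib_right]; exact Finset.card_union_le _ _
    have h4 : (A ∪ B ∪ D).card ≤ C.card := Finset.card_le_card (by
      intro x hx
      rcases Finset.mem_union.mp hx with hx | hx
      · rcases Finset.mem_union.mp hx with hx | hx
        · exact hA hx
        · exact hB hx
      · exact hD hx)
    omega
  have hb := bonf (C.filter (fun e => u ∈ e)) (C.filter (fun e => v ∈ e))
    (C.filter (fun e => w ∈ e)) (Finset.filter_subset _ _) (Finset.filter_subset _ _)
    (Finset.filter_subset _ _)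
  have iAB := inter_card_le (C := C) huv
  have iAD := inter_card_le (C := C) huw
  have iBD := inter_card_le (C := C) hvw
  unfold dC at hlt
  have h1 : 1 ≤ ((C.filter (fun e => u ∈ e)) ∩ (C.filter (fun e => v ∈ e))).card := by omega
  have h2 : 1 ≤ ((C.filter (fun e => u ∈ e)) ∩ (C.filter (fun e => w ∈ e))).card := by omega
  have h3 : 1 ≤ ((C.filter (fun e => v ∈ e)) ∩ (C.filter (fun e => w ∈ e))).card := by omega
  exact htf {u,v,w} (SimpleGraph.is3Clique_triple_iff.mpr
    ⟨adj_of_inter hC huv h1, adj_of_inter hC huw h2, adj_of_inter hC hvw h3⟩)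

private lemma iso_bound {C : Finset (Sym2 V)} {v : V} (h2 : 2 ≤ dC C v) :
    dC C v + (isoEdges C).card ≤ C.card := by
  have hdisj : Disjoint (C.filter (fun e => v ∈ e)) (isoEdges C) := by
    rw [Finset.disjoint_left]
    intro e he hiso
    rw [Finset.mem_filter] at he
    have h1 := (Finset.mem_filter.mp hiso).2 v he.2
    omega
  have hcu := Finset.card_union_of_disjoint hdisj
  have hsub : (C.filter (fun e => v ∈ e)) ∪ isoEdges C ⊆ C :=
    Finset.union_subset (Finset.filter_subset _ _) (Finset.filter_subset _ _)
  have hle := Finset.card_le_card hsub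
  have : dC C v = (C.filter (fun e => v ∈ e)).card := rfl
  omega

private lemma iso_a1 {C : Finset (Sym2 V)} (hC : C ⊆ G.edgeFinset) :
    2 * (isoEdges C).card ≤ (univ.filter (fun v => dC C v = 1)).card := by
  have key : ((isoEdges C).biUnion (fun e => univ.filter (fun v => v ∈ e))).card
      = 2 * (isoEdges C).card := by
    rw [Finset.card_biUnion]
    · refine Eq.trans (Finset.sum_congr rfl fun e he =>
        card_mem_filter (not_diag_of_mem hC (Finset.filter_subset _ _ he))) ?_
      rw [Finset.sum_const, smul_eq_mul, mul_comm]
    · intro e he f hf hef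
      rw [Function.onFun, Finset.disjoint_left]
      intro v hv hv'
      rw [Finset.mem_filter] at hv hv'
      have h1 : dC C v = 1 := (Finset.mem_filter.mp he).2 v hv.2
      have hsub : ({e, f} : Finset (Sym2 V)) ⊆ C.filter (fun x => v ∈ x) := by
        intro x hx
        rcases Finset.mem_insert.mp hx with rfl | hx
        · exact Finset.mem_filter.mpr ⟨Finset.filter_subset _ _ he, hv.2⟩
        · rw [Finset.mem_singleton] at hx
          subst hx
          exact Finset.mem_filter.mpr ⟨Finset.filter_subset _ _ hf, hv'.2⟩
      have h2 : 2 ≤ dC C v := by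
        have := Finset.card_le_card hsub
        rwa [Finset.card_pair hef] at this
      omega
  have hsub : ((isoEdges C).biUnion fun e => univ.filter (fun v => v ∈ e))
      ⊆ univ.filter (fun v => dC C v = 1) := by
    intro v hv
    rw [Finset.mem_biUnion] at hv
    obtain ⟨e, he, hv⟩ := hv
    rw [Finset.mem_filter] at hv ⊢
    exact ⟨Finset.mem_univ v, (Finset.mem_filter.mp he).2 v hv.2⟩
  have := Finset.card_le_card hsub
  omega

end ClusterLemmas

section Cluster2
variable {V : Type*} [Fintype V] {G : SimpleGraph V} [DecidableRel G.Adj]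

private lemma impurity_eq {C : Finset (Sym2 V)} (hC : C ⊆ G.edgeFinset)
    (hdeg : ∀ v, G.degree v ≤ 3) (hm : C.card ≠ 0) :
    impurity C
      = ((univ.filter (fun v => dC C v = 1)).card : ℝ) * (1 + Real.logb 2 C.card)
        + ((univ.filter (fun v => dC C v = 2)).card : ℝ) * (2 * Real.logb 2 C.card)
        + ((univ.filter (fun v => dC C v = 3)).card : ℝ)
            * (3 * (1 + Real.logb 2 C.card - Real.logb 2 3)) := by
  have hmr : ((C.card:ℕ):ℝ) ≠ 0 := Nat.cast_ne_zero.mpr hm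
  have hlog2 : Real.logb 2 (2*(C.card:ℝ)) = 1 + Real.logb 2 C.card := by
    rw [Real.logb_mul (by norm_num) hmr, Real.logb_self_eq_one (by norm_num)]
  have hstep : ∀ v : V,
      ((C.filter (fun e => v ∈ e)).card : ℝ) *
        Real.logb 2 ((2 * C.card : ℝ) / ((C.filter (fun e => v ∈ e)).card : ℝ))
      = (if dC C v = 1 then (1:ℝ) else 0) * (1 + Real.logb 2 C.card)
        + (if dC C v = 2 then (1:ℝ) else 0) * (2 * Real.logb 2 C.card)
        + (if dC C v = 3 then (1:ℝ) else 0) * (3 * (1 + Real.logb 2 C.card - Real.logb 2 3)) := by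
    intro v
    have h3 := dC_le_three hC hdeg v
    have hdd : (C.filter (fun e => v ∈ e)).card = dC C v := rfl
    rw [hdd]
    interval_cases h : dC C v
    · norm_num
    · norm_num [hlog2]
    · rw [show ((2:ℝ) * (C.card:ℝ)) / ((2:ℕ):ℝ) = (C.card:ℝ) by push_cast; ring]
      norm_num
    · rw [show ((2:ℝ) * (C.card:ℝ)) / ((3:ℕ):ℝ) = (2*(C.card:ℝ))/3 by push_cast; ring,
        Real.logb_div (by positivity) (by norm_num), hlog2]
      norm_num
  unfold impurity
  rw [Finset.sum_congr rfl fun v _ => hstep v]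
  rw [Finset.sum_add_distrib, Finset.sum_add_distrib, ← Finset.sum_mul, ← Finset.sum_mul,
    ← Finset.sum_mul, Finset.sum_boole, Finset.sum_boole, Finset.sum_boole]

end Cluster2

section Cluster3
variable {V : Type*} [Fintype V] {G : SimpleGraph V} [DecidableRel G.Adj]

private lemma cluster_bound {C : Finset (Sym2 V)} (hC : C ⊆ G.edgeFinset)
    (htf : G.CliqueFree 3) (hdeg : ∀ v, G.degree v ≤ 3) :
    6 + 3*((C.card:ℝ) - 2) * Real.logb 2 3
      + (1.25 - 0.75 * Real.logb 2 3) *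
        (((univ.filter (fun v => 2 ≤ dC C v)).card : ℝ) + ((isoEdges C).card : ℝ) - 1)
      ≤ impurity C := by
  have hL1 := L_lb; have hL2 := L_ub
  by_cases hm : C.card = 0
  · have hC0 : C = ∅ := Finset.card_eq_zero.mp hm
    subst hC0
    have h1 : impurity (∅ : Finset (Sym2 V)) = 0 := by unfold impurity; simp
    have h2 : (univ.filter (fun v => 2 ≤ dC (∅ : Finset (Sym2 V)) v)) = (∅ : Finset V) := by
      ext v; simp [dC]
    have h3 : isoEdges (∅ : Finset (Sym2 V)) = ∅ := by simp [isoEdges]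
    rw [h1, h2, h3]
    simp only [Finset.card_empty, Nat.cast_zero]
    linarith
  · -- abbreviations
    have hds := degsum hC hdeg
    have hia := iso_a1 hC
    have hs2 : 1 ≤ (univ.filter (fun v => dC C v = 2)).card →
        (isoEdges C).card + 2 ≤ C.card := by
      intro h
      obtain ⟨v, hv⟩ := Finset.card_pos.mp h
      have hv2 : dC C v = 2 := (Finset.mem_filter.mp hv).2
      have := iso_bound (C := C) (v := v) (by omega)
      omega
    have hs3 : 1 ≤ (univ.filter (fun v => dC C v = 3)).card →
        (isoEdges C).card + 3 ≤ C.card := by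
      intro h
      obtain ⟨v, hv⟩ := Finset.card_pos.mp h
      have hv2 : dC C v = 3 := (Finset.mem_filter.mp hv).2
      have := iso_bound (C := C) (v := v) (by omega)
      omega
    have hp22 : 2 ≤ (univ.filter (fun v => dC C v = 2)).card → 3 ≤ C.card := by
      intro h
      obtain ⟨u, hu, w, hw, huw⟩ := Finset.one_lt_card.mp h
      have hu2 : dC C u = 2 := (Finset.mem_filter.mp hu).2
      have hw2 : dC C w = 2 := (Finset.mem_filter.mp hw).2
      have := pair_bound hC huw
      omega
    have hp23 : 1 ≤ (univ.filter (fun v => dC C v = 2)).card →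
        1 ≤ (univ.filter (fun v => dC C v = 3)).card → 4 ≤ C.card := by
      intro h h'
      obtain ⟨u, hu⟩ := Finset.card_pos.mp h
      obtain ⟨w, hw⟩ := Finset.card_pos.mp h'
      have hu2 : dC C u = 2 := (Finset.mem_filter.mp hu).2
      have hw3 : dC C w = 3 := (Finset.mem_filter.mp hw).2
      have huw : u ≠ w := fun he => by rw [he, hw3] at hu2; omega
      have := pair_bound hC huw
      omega
    have hp33 : 2 ≤ (univ.filter (fun v => dC C v = 3)).card → 5 ≤ C.card := by
      intro h
      obtain ⟨u, hu, w, hw, huw⟩ := Finset.one_lt_card.mp h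
      have hu3 : dC C u = 3 := (Finset.mem_filter.mp hu).2
      have hw3 : dC C w = 3 := (Finset.mem_filter.mp hw).2
      have := pair_bound hC huw
      omega
    have ht222 : 3 ≤ (univ.filter (fun v => dC C v = 2)).card → 4 ≤ C.card := by
      intro h
      obtain ⟨t, hts, ht⟩ := Finset.exists_subset_card_eq h
      obtain ⟨u, v, w, huv, huw, hvw, rfl⟩ := Finset.card_eq_three.mp ht
      have hu2 : dC C u = 2 := (Finset.mem_filter.mp (hts (by simp))).2
      have hv2 : dC C v = 2 := (Finset.mem_filter.mp (hts (by simp))).2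
      have hw2 : dC C w = 2 := (Finset.mem_filter.mp (hts (by simp))).2
      have := triple_bound hC htf huv huw hvw
      omega
    have ht223 : 2 ≤ (univ.filter (fun v => dC C v = 2)).card →
        1 ≤ (univ.filter (fun v => dC C v = 3)).card → 5 ≤ C.card := by
      intro h h'
      obtain ⟨u, hu, w, hw, huw⟩ := Finset.one_lt_card.mp h
      obtain ⟨x, hx⟩ := Finset.card_pos.mp h'
      have hu2 : dC C u = 2 := (Finset.mem_filter.mp hu).2
      have hw2 : dC C w = 2 := (Finset.mem_filter.mp hw).2
      have hx3 : dC C x = 3 := (Finset.mem_filter.mp hx).2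
      have hux : u ≠ x := fun he => by rw [he, hx3] at hu2; omega
      have hwx : w ≠ x := fun he => by rw [he, hx3] at hw2; omega
      have := triple_bound hC htf huw hux hwx
      omega
    have ht233 : 1 ≤ (univ.filter (fun v => dC C v = 2)).card →
        2 ≤ (univ.filter (fun v => dC C v = 3)).card → 6 ≤ C.card := by
      intro h h'
      obtain ⟨x, hx⟩ := Finset.card_pos.mp h
      obtain ⟨u, hu, w, hw, huw⟩ := Finset.one_lt_card.mp h'
      have hx2 : dC C x = 2 := (Finset.mem_filter.mp hx).2
      have hu3 : dC C u = 3 := (Finset.mem_filter.mp hu).2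
      have hw3 : dC C w = 3 := (Finset.mem_filter.mp hw).2
      have hxu : x ≠ u := fun he => by rw [he, hu3] at hx2; omega
      have hxw : x ≠ w := fun he => by rw [he, hw3] at hx2; omega
      have := triple_bound hC htf hxu hxw huw
      omega
    have ht333 : 3 ≤ (univ.filter (fun v => dC C v = 3)).card → 7 ≤ C.card := by
      intro h
      obtain ⟨t, hts, ht⟩ := Finset.exists_subset_card_eq h
      obtain ⟨u, v, w, huv, huw, hvw, rfl⟩ := Finset.card_eq_three.mp ht
      have hu3 : dC C u = 3 := (Finset.mem_filter.mp (hts (by simp))).2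
      have hv3 : dC C v = 3 := (Finset.mem_filter.mp (hts (by simp))).2
      have hw3 : dC C w = 3 := (Finset.mem_filter.mp (hts (by simp))).2
      have := triple_bound hC htf huv huw hvw
      omega
    have harith : 6 + 3*((C.card:ℝ) - 2) * Real.logb 2 3
        + (1.25 - 0.75 * Real.logb 2 3) *
          (((univ.filter (fun v => dC C v = 2)).card:ℝ)
            + ((univ.filter (fun v => dC C v = 3)).card:ℝ) + ((isoEdges C).card:ℝ) - 1)
        ≤ 2*(C.card:ℝ)*(1 + Real.logb 2 (C.card:ℝ))
          - 2*((univ.filter (fun v => dC C v = 2)).card:ℝ)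
          - 3*(Real.logb 2 3)*((univ.filter (fun v => dC C v = 3)).card:ℝ) := by
      rcases le_or_gt C.card 6 with h | h
      · have := arith_small C.card (univ.filter (fun v => dC C v = 2)).card
          (univ.filter (fun v => dC C v = 3)).card (isoEdges C).card
          (by omega) h (by omega) hs2 hs3 hp22 hp23 hp33 ht222 ht223 ht233 ht333
        push_cast at this ⊢
        linarith
      · have := arith_large C.card (univ.filter (fun v => dC C v = 2)).card
          (univ.filter (fun v => dC C v = 3)).card (isoEdges C).card (by omega) (by omega)
        push_cast at this ⊢
        linarith
    have hqle : (univ.filter (fun v => 2 ≤ dC C v)).card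
        ≤ (univ.filter (fun v => dC C v = 2)).card + (univ.filter (fun v => dC C v = 3)).card := by
      have hsub : univ.filter (fun v => 2 ≤ dC C v)
          ⊆ univ.filter (fun v => dC C v = 2) ∪ univ.filter (fun v => dC C v = 3) := by
        intro v hv
        have h3 := dC_le_three hC hdeg v
        rw [Finset.mem_filter] at hv
        rw [Finset.mem_union, Finset.mem_filter, Finset.mem_filter]
        simp only [Finset.mem_univ, true_and] at hv ⊢
        omega
      exact le_trans (Finset.card_le_card hsub) (Finset.card_union_le _ _)
    have hc0 : (0:ℝ) ≤ 1.25 - 0.75 * Real.logb 2 3 := by linarith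
    have hmono : (1.25 - 0.75 * Real.logb 2 3) *
        (((univ.filter (fun v => 2 ≤ dC C v)).card : ℝ) + ((isoEdges C).card : ℝ) - 1)
        ≤ (1.25 - 0.75 * Real.logb 2 3) *
          (((univ.filter (fun v => dC C v = 2)).card:ℝ)
            + ((univ.filter (fun v => dC C v = 3)).card:ℝ) + ((isoEdges C).card:ℝ) - 1) := by
      apply mul_le_mul_of_nonneg_left _ hc0
      have : ((univ.filter (fun v => 2 ≤ dC C v)).card : ℝ)
          ≤ ((univ.filter (fun v => dC C v = 2)).card:ℝ)
            + ((univ.filter (fun v => dC C v = 3)).card:ℝ) := by exact_mod_cast hqle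
      linarith
    have hiden : impurity C = 2*(C.card:ℝ)*(1 + Real.logb 2 (C.card:ℝ))
        - 2*((univ.filter (fun v => dC C v = 2)).card:ℝ)
        - 3*(Real.logb 2 3)*((univ.filter (fun v => dC C v = 3)).card:ℝ) := by
      rw [impurity_eq hC hdeg hm]
      have hdsr : ((univ.filter (fun v => dC C v = 1)).card:ℝ)
          + 2*((univ.filter (fun v => dC C v = 2)).card:ℝ)
          + 3*((univ.filter (fun v => dC C v = 3)).card:ℝ) = 2*(C.card:ℝ) := by
        exact_mod_cast hds
      linear_combination (1 + Real.logb 2 (C.card:ℝ)) * hdsr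
    rw [hiden]
    linarith

end Cluster3

/-- let `G = (V, E)` be a finite simple triangle-free graph of maximum
degree at most 3 with `|E| ≤ 3k`, and suppose every vertex cover of `G` has size at
least `k(1+ε)`. With `κ = 6k + 3(|E| − 2k)·log₂ 3` and
`η = (1.25 − 0.75·log₂ 3)·ε/(6 + 3·log₂ 3)`, every partition of `E` into `k` clusters
has total entropy impurity at least `(1+η)·κ`. -/
theorem clustering_impurity_gap {V : Type*} [Fintype V] (G : SimpleGraph V)
    [DecidableRel G.Adj]
    (htf : G.CliqueFree 3) (hdeg : ∀ v : V, G.degree v ≤ 3)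
    (k : ℕ) (hk : 0 < k) (hE : G.edgeFinset.card ≤ 3 * k)
    (ε : ℝ) (hε : 0 < ε)
    (hVC : ∀ S : Finset V, IsVCover G S → (k : ℝ) * (1 + ε) ≤ S.card)
    (C : Fin k → Finset (Sym2 V))
    (hdisj : ∀ i j, i ≠ j → Disjoint (C i) (C j))
    (hcover : ∀ e : Sym2 V, e ∈ G.edgeSet ↔ ∃ i, e ∈ C i) :
    (1 + (1.25 - 0.75 * Real.logb 2 3) * ε / (6 + 3 * Real.logb 2 3)) *
        (6 * (k : ℝ) + 3 * ((G.edgeFinset.card : ℝ) - 2 * k) * Real.logb 2 3)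
      ≤ ∑ i, impurity (C i) := by
  have hL1 := L_lb; have hL2 := L_ub
  have hCsub : ∀ i, C i ⊆ G.edgeFinset := fun i e he =>
    SimpleGraph.mem_edgeFinset.mpr ((hcover e).mpr ⟨i, he⟩)
  have huni : G.edgeFinset = univ.biUnion C := by
    ext e
    rw [Finset.mem_biUnion, SimpleGraph.mem_edgeFinset, hcover e]
    constructor
    · rintro ⟨i, hi⟩; exact ⟨i, Finset.mem_univ i, hi⟩
    · rintro ⟨i, _, hi⟩; exact ⟨i, hi⟩
  have hcard : G.edgeFinset.card = ∑ i, (C i).card := by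
    rw [huni]; exact Finset.card_biUnion (fun i _ j _ h => hdisj i j h)
  set S : Finset V := (univ.filter (fun v => ∃ i, 2 ≤ dC (C i) v)) ∪
      Finset.univ.biUnion (fun i => (isoEdges (C i)).image (fun e => e.out.1)) with hS
  have hScover : IsVCover G S := by
    intro e he
    obtain ⟨i, hei⟩ := (hcover e).mp he
    by_cases hbig : ∃ v, v ∈ e ∧ 2 ≤ dC (C i) v
    · obtain ⟨v, hv, h2⟩ := hbig
      exact ⟨v, Finset.mem_union_left _ (Finset.mem_filter.mpr ⟨Finset.mem_univ _, ⟨i, h2⟩⟩), hv⟩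
    · push_neg at hbig
      have hiso : e ∈ isoEdges (C i) := by
        rw [isoEdges, Finset.mem_filter]
        refine ⟨hei, fun v hv => ?_⟩
        have h1 : 0 < dC (C i) v := Finset.card_pos.mpr ⟨e, Finset.mem_filter.mpr ⟨hei, hv⟩⟩
        have h2 := hbig v hv
        omega
      exact ⟨e.out.1, Finset.mem_union_right _
        (Finset.mem_biUnion.mpr ⟨i, Finset.mem_univ _, Finset.mem_image.mpr ⟨e, hiso, rfl⟩⟩),
        Sym2.out_fst_mem e⟩
  have hSsize := hVC S hScover
  have hScard : S.card ≤ ∑ i, ((univ.filter (fun v => 2 ≤ dC (C i) v)).card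
      + (isoEdges (C i)).card) := by
    have hb1 : (univ.filter (fun v => ∃ i, 2 ≤ dC (C i) v)).card
        ≤ ∑ i, (univ.filter (fun v => 2 ≤ dC (C i) v)).card := by
      refine le_trans (Finset.card_le_card ?_) (Finset.card_biUnion_le)
      intro v hv
      obtain ⟨i, hi⟩ := (Finset.mem_filter.mp hv).2
      exact Finset.mem_biUnion.mpr ⟨i, Finset.mem_univ _,
        Finset.mem_filter.mpr ⟨Finset.mem_univ _, hi⟩⟩
    have hb2 : (Finset.univ.biUnion (fun i => (isoEdges (C i)).image (fun e => e.out.1))).card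
        ≤ ∑ i, (isoEdges (C i)).card :=
      le_trans Finset.card_biUnion_le (Finset.sum_le_sum fun i _ => Finset.card_image_le)
    calc S.card ≤ _ + _ := Finset.card_union_le _ _
      _ ≤ ∑ i, (univ.filter (fun v => 2 ≤ dC (C i) v)).card + ∑ i, (isoEdges (C i)).card :=
          Nat.add_le_add hb1 hb2
      _ = _ := Finset.sum_add_distrib.symm
  have hsumI : ∑ i, (6 + 3*(((C i).card:ℝ) - 2) * Real.logb 2 3
      + (1.25 - 0.75 * Real.logb 2 3) *
        (((univ.filter (fun v => 2 ≤ dC (C i) v)).card : ℝ) + ((isoEdges (C i)).card : ℝ) - 1))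
      ≤ ∑ i, impurity (C i) :=
    Finset.sum_le_sum fun i _ => cluster_bound (hCsub i) htf hdeg
  have hM : ∑ i, (((C i).card:ℕ):ℝ) = (G.edgeFinset.card:ℝ) := by
    rw [hcard]; push_cast; rfl
  set B : ℝ := ∑ i, (((univ.filter (fun v => 2 ≤ dC (C i) v)).card : ℝ)
      + ((isoEdges (C i)).card : ℝ)) with hB
  have hkB : (k:ℝ)*(1+ε) ≤ B := by
    refine le_trans hSsize ?_
    have : ((S.card:ℕ):ℝ) ≤ ((∑ i, ((univ.filter (fun v => 2 ≤ dC (C i) v)).card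
        + (isoEdges (C i)).card) : ℕ):ℝ) := by exact_mod_cast hScard
    refine le_trans this (le_of_eq ?_)
    rw [hB]; push_cast; rfl
  have hexp : ∑ i, (6 + 3*(((C i).card:ℝ) - 2) * Real.logb 2 3
      + (1.25 - 0.75 * Real.logb 2 3) *
        (((univ.filter (fun v => 2 ≤ dC (C i) v)).card : ℝ) + ((isoEdges (C i)).card : ℝ) - 1))
      = 6*(k:ℝ) + 3*((G.edgeFinset.card:ℝ) - 2*k) * Real.logb 2 3
        + (1.25 - 0.75 * Real.logb 2 3) * (B - k) := by
    have hstep : ∀ i : Fin k, 6 + 3*(((C i).card:ℝ) - 2) * Real.logb 2 3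
        + (1.25 - 0.75 * Real.logb 2 3) *
          (((univ.filter (fun v => 2 ≤ dC (C i) v)).card : ℝ) + ((isoEdges (C i)).card : ℝ) - 1)
        = (((C i).card:ℝ)) * (3 * Real.logb 2 3)
          + (((univ.filter (fun v => 2 ≤ dC (C i) v)).card : ℝ) + ((isoEdges (C i)).card : ℝ))
            * (1.25 - 0.75 * Real.logb 2 3)
          + (6 - 6 * Real.logb 2 3 - (1.25 - 0.75 * Real.logb 2 3)) := by
      intro i; ring
    rw [Finset.sum_congr rfl fun i _ => hstep i, Finset.sum_add_distrib, Finset.sum_add_distrib,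
      ← Finset.sum_mul, ← Finset.sum_mul, hM, ← hB, Finset.sum_const, Finset.card_univ,
      Fintype.card_fin, nsmul_eq_mul]
    ring
  rw [hexp] at hsumI
  -- final numeric step
  have hc0 : (0:ℝ) ≤ 1.25 - 0.75 * Real.logb 2 3 := by linarith
  have hck : (1.25 - 0.75 * Real.logb 2 3) * ((k:ℝ)*ε) ≤ (1.25 - 0.75 * Real.logb 2 3) * (B - k) := by
    apply mul_le_mul_of_nonneg_left _ hc0
    nlinarith
  have hκub : 6*(k:ℝ) + 3*((G.edgeFinset.card:ℝ) - 2*k) * Real.logb 2 3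
      ≤ (k:ℝ) * (6 + 3 * Real.logb 2 3) := by
    have hMk : (G.edgeFinset.card:ℝ) ≤ 3*k := by exact_mod_cast hE
    have hL0 : (0:ℝ) ≤ Real.logb 2 3 := by linarith
    nlinarith
  have hden : (0:ℝ) < 6 + 3 * Real.logb 2 3 := by linarith
  have hη0 : (0:ℝ) ≤ (1.25 - 0.75 * Real.logb 2 3) * ε / (6 + 3 * Real.logb 2 3) :=
    div_nonneg (mul_nonneg hc0 hε.le) hden.le
  have hηκ : ((1.25 - 0.75 * Real.logb 2 3) * ε / (6 + 3 * Real.logb 2 3)) *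
      (6*(k:ℝ) + 3*((G.edgeFinset.card:ℝ) - 2*k) * Real.logb 2 3)
      ≤ (1.25 - 0.75 * Real.logb 2 3) * ((k:ℝ)*ε) := by
    refine le_trans (mul_le_mul_of_nonneg_left hκub hη0) (le_of_eq ?_)
    field_simp
  nlinarith [hsumI, hck, hηκ]
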